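/- Let A be a finite generating set of ℤ², let B ⊂ ℝ² be the convex hull of A ∪ (−A), and let ‖·‖_B denote the norm on ℝ² whose unit ball is B. Then the quantity | |v|_A − ‖v‖_B | is bounded uniformly over all v ∈ ℤ²: there exists K ∈ ℝ such that | |v|_A − ‖v‖_B | ≤ K for every v ∈ ℤ². -/

import Mathlib

open Pointwise

/-- The word length `|v|_A` of `v ∈ ℤ²` with respect to the finite generating set `A`:
the length of a shortest word in the letters of `A` and their inverses (negatives)
representing `v`. -/
noncomputable def wlenZ2 (A : Finset (ℤ × ℤ)) (v : ℤ × ℤ) : ℕ :=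
  sInf {n | ∃ w : List (ℤ × ℤ), (∀ a ∈ w, a ∈ A ∨ -a ∈ A) ∧ w.length = n ∧ w.sum = v}

/-- The standard embedding of `ℤ²` into `ℝ²`. -/
def toR2 (v : ℤ × ℤ) : ℝ × ℝ := ((v.1 : ℝ), (v.2 : ℝ))

/-- `toR2` as an additive monoid hom. -/
def toR2Hom : (ℤ × ℤ) →+ (ℝ × ℝ) where
  toFun := toR2
  map_zero' := by simp [toR2]
  map_add' a b := by simp [toR2, Prod.ext_iff]

lemma toR2_inj : Function.Injective toR2 := by
  intro a b h
  simp only [toR2, Prod.ext_iff] at h ⊢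
  exact ⟨Int.cast_injective h.1, Int.cast_injective h.2⟩

lemma sum_map_neg_list (w : List (ℤ × ℤ)) : (w.map (fun a => -a)).sum = -w.sum := by
  induction w with
  | nil => simp
  | cons a l ih => simp [ih, add_comm]

lemma exists_word (A : Finset (ℤ × ℤ))
    (hA : AddSubgroup.closure (A : Set (ℤ × ℤ)) = ⊤) (v : ℤ × ℤ) :
    ∃ w : List (ℤ × ℤ), (∀ a ∈ w, a ∈ A ∨ -a ∈ A) ∧ w.sum = v := by
  have hv : v ∈ AddSubgroup.closure (A : Set (ℤ × ℤ)) := by rw [hA]; trivial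
  refine AddSubgroup.closure_induction ?_ ?_ ?_ ?_ hv
  · intro a ha
    exact ⟨[a], by intro x hx; simp at hx; subst hx; exact Or.inl ha, by simp⟩
  · exact ⟨[], by simp, by simp⟩
  · rintro x y _ _ ⟨w1, hw1, rfl⟩ ⟨w2, hw2, rfl⟩
    refine ⟨w1 ++ w2, ?_, by simp⟩
    intro a ha
    rcases List.mem_append.1 ha with h | h
    exacts [hw1 a h, hw2 a h]
  · rintro x _ ⟨w, hw, rfl⟩
    refine ⟨w.map (fun a => -a), ?_, sum_map_neg_list w⟩
    intro a ha
    rcases List.mem_map.1 ha with ⟨b, hb, rfl⟩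
    rcases hw b hb with h | h
    · exact Or.inr (by simpa using h)
    · exact Or.inl h

lemma wlen_set_nonempty (A : Finset (ℤ × ℤ))
    (hA : AddSubgroup.closure (A : Set (ℤ × ℤ)) = ⊤) (v : ℤ × ℤ) :
    {n | ∃ w : List (ℤ × ℤ), (∀ a ∈ w, a ∈ A ∨ -a ∈ A) ∧ w.length = n ∧ w.sum = v}.Nonempty := by
  obtain ⟨w, hw, hs⟩ := exists_word A hA v
  exact ⟨w.length, w, hw, rfl, hs⟩

lemma wlen_le (A : Finset (ℤ × ℤ)) {v : ℤ × ℤ} {w : List (ℤ × ℤ)}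
    (hw : ∀ a ∈ w, a ∈ A ∨ -a ∈ A) (hs : w.sum = v) :
    wlenZ2 A v ≤ w.length :=
  Nat.sInf_le ⟨w, hw, rfl, hs⟩

lemma wlen_spec (A : Finset (ℤ × ℤ))
    (hA : AddSubgroup.closure (A : Set (ℤ × ℤ)) = ⊤) (v : ℤ × ℤ) :
    ∃ w : List (ℤ × ℤ), (∀ a ∈ w, a ∈ A ∨ -a ∈ A) ∧ w.length = wlenZ2 A v ∧ w.sum = v :=
  Nat.sInf_mem (wlen_set_nonempty A hA v)

/-- A word realizing a nonnegative integer combination of generators. -/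
lemma exists_word_sum_nsmul (A : Finset (ℤ × ℤ)) (s : Finset (ℤ × ℤ)) (n : (ℤ × ℤ) → ℕ)
    (hs : ∀ g ∈ s, g ∈ A ∨ -g ∈ A) :
    ∃ w : List (ℤ × ℤ), (∀ a ∈ w, a ∈ A ∨ -a ∈ A) ∧
      w.length = ∑ g ∈ s, n g ∧ w.sum = ∑ g ∈ s, (n g) • g := by
  classical
  induction s using Finset.induction with
  | empty => exact ⟨[], by simp, by simp, by simp⟩
  | insert _ _ hnotmem =>
    rename_i a s' ih
    obtain ⟨w, hw, hlen, hsum⟩ := ih (fun g hg => hs g (Finset.mem_insert_of_mem hg))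
    refine ⟨List.replicate (n a) a ++ w, ?_, ?_, ?_⟩
    · intro x hx
      rcases List.mem_append.1 hx with h | h
      · rw [List.eq_of_mem_replicate h]; exact hs a (Finset.mem_insert_self a s')
      · exact hw x h
    · simp [hlen, Finset.sum_insert hnotmem]
    · simp [hsum, Finset.sum_insert hnotmem, List.sum_replicate]

/-- Sums of `n` points of a convex set lie in `n • B`. -/
lemma list_sum_mem_smul {B : Set (ℝ × ℝ)} (hconv : Convex ℝ B) (h0 : (0 : ℝ × ℝ) ∈ B) :
    ∀ l : List (ℝ × ℝ), (∀ x ∈ l, x ∈ B) → l.sum ∈ (l.length : ℝ) • B := by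
  intro l
  induction l with
  | nil =>
    intro _
    simp only [List.sum_nil, List.length_nil, Nat.cast_zero]
    exact ⟨0, h0, smul_zero 0⟩
  | cons a l ih =>
    intro h
    have hmem : a + l.sum ∈ (1 : ℝ) • B + (l.length : ℝ) • B :=
      Set.add_mem_add ⟨a, h a (by simp), one_smul ℝ a⟩ (ih fun x hx => h x (by simp [hx]))
    rw [← hconv.add_smul zero_le_one (Nat.cast_nonneg _)] at hmem
    simpa [add_comm] using hmem

/-- Let `A` be a finite generating set of `ℤ²`, `B ⊂ ℝ²` the convex hull of
`A ∪ (-A)`, and `‖·‖_B = gauge B` the norm on `ℝ²` whose unit ball is `B`. Then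
`| |v|_A − ‖v‖_B |` is bounded uniformly over `v ∈ ℤ²`. -/
theorem wordLength_close_to_gauge_norm
    (A : Finset (ℤ × ℤ)) (hA : AddSubgroup.closure (A : Set (ℤ × ℤ)) = ⊤)
    (B : Set (ℝ × ℝ))
    (hB : B = convexHull ℝ (toR2 '' ((A : Set (ℤ × ℤ)) ∪ (-(A : Set (ℤ × ℤ)))))) :
    ∃ K : ℝ, ∀ v : ℤ × ℤ, |(wlenZ2 A v : ℝ) - gauge B (toR2 v)| ≤ K := by
  classical
  -- the symmetrized generating set
  set G : Finset (ℤ × ℤ) := A ∪ A.image (fun a => -a) with hGdef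
  have hGgen : ∀ g ∈ G, g ∈ A ∨ -g ∈ A := by
    intro g hg
    rcases Finset.mem_union.1 hg with h | h
    · exact Or.inl h
    · rcases Finset.mem_image.1 h with ⟨b, hb, rfl⟩
      exact Or.inr (by simpa using hb)
  have hGcoe : ((G.image toR2 : Finset (ℝ × ℝ)) : Set (ℝ × ℝ))
      = toR2 '' ((A : Set (ℤ × ℤ)) ∪ (-(A : Set (ℤ × ℤ)))) := by
    rw [Finset.coe_image, hGdef, Finset.coe_union, Finset.coe_image]
    congr 1
    rw [Set.image_neg_eq_neg]
  have hBhull : B = convexHull ℝ ((G.image toR2 : Finset (ℝ × ℝ)) : Set (ℝ × ℝ)) := by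
    rw [hB, hGcoe]
  have hconv : Convex ℝ B := hB ▸ convex_convexHull ℝ _
  have hAne : A.Nonempty := by
    rcases A.eq_empty_or_nonempty with h | h
    · exfalso
      rw [h] at hA
      simp only [Finset.coe_empty, AddSubgroup.closure_empty] at hA
      have : ((1, 0) : ℤ × ℤ) ∈ (⊥ : AddSubgroup (ℤ × ℤ)) := by rw [hA]; trivial
      simp [AddSubgroup.mem_bot, Prod.ext_iff] at this
    · exact h
  -- every generator image lies in B, and 0 ∈ B
  have hGB : ∀ g ∈ G, toR2 g ∈ B := by
    intro g hg
    rw [hBhull]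
    exact subset_convexHull ℝ _ (by
      simp only [Finset.coe_image, Set.mem_image]
      exact ⟨g, by simpa using hg, rfl⟩)
  have h0B : (0 : ℝ × ℝ) ∈ B := by
    obtain ⟨a, ha⟩ := hAne
    have ha1 : toR2 a ∈ B := hGB a (Finset.mem_union_left _ ha)
    have ha2 : toR2 (-a) ∈ B := hGB (-a)
      (Finset.mem_union_right _ (Finset.mem_image_of_mem _ ha))
    have hneg : toR2 (-a) = -toR2 a := map_neg toR2Hom a
    have := hconv ha1 ha2 (by norm_num : (0:ℝ) ≤ 1/2) (by norm_num : (0:ℝ) ≤ 1/2) (by norm_num)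
    rw [hneg, smul_neg] at this
    simpa using this
  -- words give membership in scaled copies of B
  have hword_mem : ∀ (w : List (ℤ × ℤ)), (∀ a ∈ w, a ∈ A ∨ -a ∈ A) →
      toR2 w.sum ∈ (w.length : ℝ) • B := by
    intro w hw
    have hmap : toR2 w.sum = (w.map toR2).sum := by
      exact map_list_sum toR2Hom w
    have hlen : (w.map toR2).length = w.length := List.length_map toR2
    rw [hmap, ← hlen]
    refine list_sum_mem_smul hconv h0B _ ?_
    intro x hx
    rcases List.mem_map.1 hx with ⟨a, ha, rfl⟩
    rcases hw a ha with h | h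
    · exact hGB a (Finset.mem_union_left _ h)
    · refine hGB a (Finset.mem_union_right _ ?_)
      refine Finset.mem_image.2 ⟨-a, h, by simp⟩
  -- the lower bound: gauge ≤ word length
  have hlower : ∀ v : ℤ × ℤ, gauge B (toR2 v) ≤ (wlenZ2 A v : ℝ) := by
    intro v
    obtain ⟨w, hw, hlen, hsum⟩ := wlen_spec A hA v
    have := hword_mem w hw
    rw [hsum, hlen] at this
    exact gauge_le_of_mem (Nat.cast_nonneg _) this
  -- the constant
  set M : ℝ := ∑ g ∈ G, ‖toR2 g‖ with hMdef
  set c : ℤ := ⌈M⌉ with hcdef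
  set D : Finset (ℤ × ℤ) := Finset.Icc (-c, -c) (c, c) with hDdef
  set C1 : ℕ := D.sup (wlenZ2 A) with hC1def
  refine ⟨(C1 : ℝ) + 1, ?_⟩
  intro v
  -- the scaling factor t
  set S : Set ℝ := {r : ℝ | 0 < r ∧ toR2 v ∈ r • B} with hSdef
  have hSne : S.Nonempty := by
    obtain ⟨w, hw, hsum⟩ := exists_word A hA v
    refine ⟨(w.length : ℝ) + 1, by positivity, ?_⟩
    have h1 : toR2 v + 0 ∈ (w.length : ℝ) • B + (1 : ℝ) • B :=
      Set.add_mem_add (hsum ▸ hword_mem w hw) ⟨0, h0B, smul_zero 1⟩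
    rw [← hconv.add_smul (Nat.cast_nonneg _) zero_le_one] at h1
    simpa using h1
  have hSbdd : BddBelow S := ⟨0, fun r hr => hr.1.le⟩
  have hgauge : gauge B (toR2 v) = sInf S := rfl
  have hlt : sInf S < gauge B (toR2 v) + 1 := by rw [← hgauge]; linarith
  obtain ⟨t, htS, htlt⟩ := (csInf_lt_iff hSbdd hSne).1 hlt
  have ht0 : 0 < t := htS.1
  obtain ⟨b, hbB, htb⟩ := htS.2
  obtain ⟨wt, hw0, hw1, hwsum⟩ := Finset.mem_convexHull'.1 (hBhull ▸ hbB)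
  set μ : (ℤ × ℤ) → ℝ := fun g => t * wt (toR2 g) with hμdef
  have hinj : ∀ x ∈ G, ∀ y ∈ G, toR2 x = toR2 y → x = y := fun x _ y _ h => toR2_inj h
  have hμ0 : ∀ g ∈ G, 0 ≤ μ g := fun g hg =>
    mul_nonneg ht0.le (hw0 _ (Finset.mem_image_of_mem _ hg))
  have himg : ∀ f : (ℝ × ℝ) → (ℝ × ℝ),
      ∑ y ∈ G.image toR2, f y = ∑ g ∈ G, f (toR2 g) := fun f => Finset.sum_image hinj
  have hw1' : ∑ g ∈ G, wt (toR2 g) = 1 := by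
    rw [← hw1]; exact (Finset.sum_image hinj).symm
  have hsumμ : ∑ g ∈ G, μ g = t := by
    simp only [hμdef, ← Finset.mul_sum, hw1', mul_one]
  have hsumv : ∑ g ∈ G, μ g • toR2 g = toR2 v := by
    have himg2 : ∑ y ∈ G.image toR2, wt y • y = ∑ g ∈ G, wt (toR2 g) • toR2 g :=
      Finset.sum_image hinj
    calc ∑ g ∈ G, μ g • toR2 g = t • ∑ g ∈ G, wt (toR2 g) • toR2 g := by
          rw [Finset.smul_sum]
          exact Finset.sum_congr rfl fun g _ => mul_smul t _ _
      _ = t • b := by rw [← himg2, hwsum]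
      _ = toR2 v := htb
  set n : (ℤ × ℤ) → ℕ := fun g => ⌊μ g⌋₊ with hndef
  set u : ℤ × ℤ := ∑ g ∈ G, (n g) • g with hudef
  set d : ℤ × ℤ := v - u with hddef
  -- word length bound for v
  obtain ⟨wu, hwu, hwulen, hwusum⟩ := exists_word_sum_nsmul A G n hGgen
  obtain ⟨wd, hwd, hwdlen, hwdsum⟩ := wlen_spec A hA d
  have hv_le : wlenZ2 A v ≤ (∑ g ∈ G, n g) + wlenZ2 A d := by
    have : wlenZ2 A v ≤ (wu ++ wd).length := by
      refine wlen_le A ?_ ?_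
      · intro a ha
        rcases List.mem_append.1 ha with h | h
        exacts [hwu a h, hwd a h]
      · rw [List.sum_append, hwusum, hwdsum, ← hudef, hddef]
        abel
    simpa [hwulen, hwdlen] using this
  -- the real-valued bound on ∑ n g
  have hsum_le : (∑ g ∈ G, (n g : ℝ)) ≤ t := by
    rw [← hsumμ]
    exact Finset.sum_le_sum fun g hg => Nat.floor_le (hμ0 g hg)
  -- toR2 u and toR2 d
  have htou : toR2 u = ∑ g ∈ G, (n g : ℝ) • toR2 g := by
    have : toR2Hom u = ∑ g ∈ G, (n g) • toR2Hom g := by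
      rw [hudef, map_sum]
      exact Finset.sum_congr rfl fun g _ => map_nsmul toR2Hom (n g) g
    change toR2 u = ∑ g ∈ G, (n g) • toR2 g at this
    simpa [Nat.cast_smul_eq_nsmul] using this
  have htod : toR2 d = ∑ g ∈ G, (μ g - (n g : ℝ)) • toR2 g := by
    have hds : toR2 d = toR2 v - toR2 u := by
      exact map_sub toR2Hom v u
    rw [hds, ← hsumv, htou, ← Finset.sum_sub_distrib]
    exact Finset.sum_congr rfl fun g _ => (sub_smul _ _ _).symm
  -- norm bound on d
  have hMnorm : ‖toR2 d‖ ≤ M := by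
    rw [htod]
    calc ‖∑ g ∈ G, (μ g - (n g : ℝ)) • toR2 g‖ ≤ ∑ g ∈ G, ‖(μ g - (n g : ℝ)) • toR2 g‖ :=
          norm_sum_le _ _
      _ ≤ ∑ g ∈ G, ‖toR2 g‖ := by
          refine Finset.sum_le_sum fun g hg => ?_
          rw [norm_smul]
          have h1 : (n g : ℝ) ≤ μ g := Nat.floor_le (hμ0 g hg)
          have h2 : μ g < (n g : ℝ) + 1 := Nat.lt_floor_add_one _
          have : ‖μ g - (n g : ℝ)‖ ≤ 1 := by
            rw [Real.norm_eq_abs]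
            exact abs_le.2 ⟨by linarith, by linarith⟩
          calc ‖μ g - (n g : ℝ)‖ * ‖toR2 g‖ ≤ 1 * ‖toR2 g‖ := by
                exact mul_le_mul_of_nonneg_right this (norm_nonneg _)
            _ = ‖toR2 g‖ := one_mul _
  have hd1 : |d.1| ≤ c := by
    have h1 : |((d.1 : ℤ) : ℝ)| ≤ M := by
      have := norm_fst_le (toR2 d)
      simp only [toR2, Real.norm_eq_abs] at this
      exact this.trans hMnorm
    have : (|d.1| : ℝ) ≤ (c : ℝ) := by
      push_cast
      exact h1.trans (Int.le_ceil M)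
    exact_mod_cast this
  have hd2 : |d.2| ≤ c := by
    have h1 : |((d.2 : ℤ) : ℝ)| ≤ M := by
      have := norm_snd_le (toR2 d)
      simp only [toR2, Real.norm_eq_abs] at this
      exact this.trans hMnorm
    have : (|d.2| : ℝ) ≤ (c : ℝ) := by
      push_cast
      exact h1.trans (Int.le_ceil M)
    exact_mod_cast this
  have hdD : d ∈ D := by
    rw [hDdef, Finset.mem_Icc]
    rw [abs_le] at hd1 hd2
    exact ⟨⟨hd1.1, hd2.1⟩, ⟨hd1.2, hd2.2⟩⟩
  have hdC : wlenZ2 A d ≤ C1 := Finset.le_sup hdD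
  -- put things together
  have hupper : (wlenZ2 A v : ℝ) ≤ gauge B (toR2 v) + 1 + C1 := by
    have h1 : (wlenZ2 A v : ℝ) ≤ (∑ g ∈ G, (n g : ℝ)) + (wlenZ2 A d : ℝ) := by
      have := hv_le
      push_cast
      exact_mod_cast Nat.cast_le.2 this |>.trans (by push_cast; linarith)
    have h2 : (wlenZ2 A d : ℝ) ≤ (C1 : ℝ) := Nat.cast_le.2 hdC
    linarith [hsum_le, htlt]
  have hlow := hlower v
  rw [abs_le]
  constructor
  · have : (0:ℝ) ≤ (C1 : ℝ) + 1 := by positivity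
    linarith
  · linarith
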